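/- Let 𝒻 be a forest of copies of finite linear k-uniform hypergraphs and let J be an induced subhypergraph of ⋃𝒻. If J is (e,v)-inseparable, then there is some F ∈ 𝒻 such that J is an induced subhypergraph of F. -/

import Mathlib

/-- A finite `k`-uniform hypergraph with vertices in `ℕ`. -/
structure UnifHypergraph (k : ℕ) where
  verts : Finset ℕ
  edges : Finset (Finset ℕ)
  card_edges : ∀ e ∈ edges, e.card = k
  edges_subset : ∀ e ∈ edges, e ⊆ verts

namespace UnifHypergraph

variable {k : ℕ}

/-- A hypergraph is linear if any two distinct edges share at most one vertex. -/
def Linear (H : UnifHypergraph k) : Prop :=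
  ∀ e ∈ H.edges, ∀ f ∈ H.edges, e ≠ f → (e ∩ f).card ≤ 1

/-- A hypergraph is connected if for every partition of its vertex set into two
nonempty parts some edge meets both parts. -/
def Connected (H : UnifHypergraph k) : Prop :=
  ∀ X Y : Finset ℕ, X ∪ Y = H.verts → Disjoint X Y → X.Nonempty → Y.Nonempty →
    ∃ e ∈ H.edges, (e ∩ X).Nonempty ∧ (e ∩ Y).Nonempty

/-- Deleting a set `z` of vertices (and all edges meeting `z`). -/
def delete (H : UnifHypergraph k) (z : Finset ℕ) : UnifHypergraph k where
  verts := H.verts \ z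
  edges := H.edges.filter fun e => Disjoint e z
  card_edges := fun e he => H.card_edges e (Finset.mem_filter.mp he).1
  edges_subset := fun e he x hx =>
    Finset.mem_sdiff.mpr ⟨H.edges_subset e (Finset.mem_filter.mp he).1 hx,
      fun hxz => Finset.disjoint_left.mp (Finset.mem_filter.mp he).2 hx hxz⟩

/-- A linear `k`-uniform hypergraph is `(e,v)`-inseparable if it is connected with at
least two edges, remains connected after deleting any set of fewer than `k` vertices no
two of which lie in a common edge, and remains connected after deleting the vertex set
of any edge. -/
def Inseparable (H : UnifHypergraph k) : Prop :=
  (H.Connected ∧ 2 ≤ H.edges.card) ∧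
  (∀ z : Finset ℕ, z ⊆ H.verts → z.card < k →
    (∀ x ∈ z, ∀ y ∈ z, x ≠ y → ∀ e ∈ H.edges, ¬(x ∈ e ∧ y ∈ e)) →
    (H.delete z).Connected) ∧
  (∀ e ∈ H.edges, (H.delete e).Connected)

/-- `J` is an induced subhypergraph of `H`: its vertex set is contained in that of `H`
and its edges are exactly the edges of `H` lying inside `V(J)`. -/
def IsInducedSub (J H : UnifHypergraph k) : Prop :=
  J.verts ⊆ H.verts ∧ ∀ e, e ∈ J.edges ↔ e ∈ H.edges ∧ e ⊆ J.verts

/-- The union of a finite family of hypergraphs. -/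
def unionOf (𝒻 : Finset (UnifHypergraph k)) : UnifHypergraph k where
  verts := 𝒻.sup UnifHypergraph.verts
  edges := 𝒻.sup UnifHypergraph.edges
  card_edges := fun e he => by
    rw [Finset.mem_sup] at he
    obtain ⟨F, _, he⟩ := he
    exact F.card_edges e he
  edges_subset := fun e he => by
    rw [Finset.mem_sup] at he
    obtain ⟨F, hF, he⟩ := he
    exact (F.edges_subset e he).trans (Finset.le_sup hF)

/-- The condition that an enumeration `F 0, F 1, …` of `k`-uniform hypergraphs forms a
forest of copies: for every `j ≥ 1` the intersection of `V(F j)` with the union of the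
vertex sets of the earlier members is empty, a single vertex, or an edge belonging both
to `F j` and to some earlier member. -/
def ForestCond {m : ℕ} (F : Fin m → UnifHypergraph k) : Prop :=
  ∀ j : Fin m, (j : ℕ) ≠ 0 →
    ((F j).verts ∩ (Finset.univ.filter fun i => i < j).sup fun i => (F i).verts) = ∅ ∨
    (∃ v, ((F j).verts ∩
      (Finset.univ.filter fun i => i < j).sup fun i => (F i).verts) = {v}) ∨
    (((F j).verts ∩
        (Finset.univ.filter fun i => i < j).sup fun i => (F i).verts) ∈ (F j).edges ∧
      ∃ i, i < j ∧ ((F j).verts ∩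
        (Finset.univ.filter fun i => i < j).sup fun i => (F i).verts) ∈ (F i).edges)

/-- A set of `k`-uniform hypergraphs is a forest of copies if it admits an enumeration
satisfying `ForestCond`. -/
def IsForestOfCopies (𝒻 : Set (UnifHypergraph k)) : Prop :=
  ∃ (m : ℕ) (F : Fin m → UnifHypergraph k), Function.Injective F ∧
    (∀ H, H ∈ 𝒻 ↔ ∃ i, F i = H) ∧ ForestCond F

end UnifHypergraph

namespace ForestAux

open UnifHypergraph

variable {k m : ℕ}

/-- `prevV F n` is the union of the vertex sets of the first `n` members. -/
def prevV (F : Fin m → UnifHypergraph k) (n : ℕ) : Finset ℕ :=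
  (Finset.univ.filter fun i : Fin m => (i : ℕ) < n).sup fun i => (F i).verts

lemma prevV_zero (F : Fin m → UnifHypergraph k) : prevV F 0 = ∅ := by
  simp [prevV]

lemma mem_prevV {F : Fin m → UnifHypergraph k} {n : ℕ} {x : ℕ} :
    x ∈ prevV F n ↔ ∃ i : Fin m, (i : ℕ) < n ∧ x ∈ (F i).verts := by
  unfold prevV
  rw [Finset.mem_sup]
  constructor
  · rintro ⟨i, hi, hx⟩
    simp only [Finset.mem_filter, Finset.mem_univ, true_and] at hi
    exact ⟨i, hi, hx⟩
  · rintro ⟨i, hi, hx⟩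
    exact ⟨i, Finset.mem_filter.mpr ⟨Finset.mem_univ i, hi⟩, hx⟩

lemma verts_subset_prevV (F : Fin m → UnifHypergraph k) {i : Fin m} {n : ℕ}
    (h : (i : ℕ) < n) : (F i).verts ⊆ prevV F n := fun x hx =>
  mem_prevV.mpr ⟨i, h, hx⟩

lemma prevV_mono (F : Fin m → UnifHypergraph k) {n n' : ℕ} (h : n ≤ n') :
    prevV F n ⊆ prevV F n' := by
  intro x hx
  obtain ⟨i, hi, hxi⟩ := mem_prevV.mp hx
  exact mem_prevV.mpr ⟨i, by omega, hxi⟩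

/-- Restated forest condition, with `ℕ`-indexed `prevV`. -/
lemma sep (F : Fin m → UnifHypergraph k) (hF : ForestCond F) (j : Fin m)
    (hj : (j : ℕ) ≠ 0) :
    (F j).verts ∩ prevV F (j : ℕ) = ∅ ∨
    (∃ v, (F j).verts ∩ prevV F (j : ℕ) = {v}) ∨
    ((F j).verts ∩ prevV F (j : ℕ) ∈ (F j).edges ∧
      ∃ i : Fin m, (i : ℕ) < (j : ℕ) ∧ (F j).verts ∩ prevV F (j : ℕ) ∈ (F i).edges) := by
  have hfe : ((Finset.univ.filter fun i => i < j).sup fun i => (F i).verts) =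
      prevV F (j : ℕ) := by
    unfold prevV
    rfl
  have h := hF j hj
  rw [hfe] at h
  rcases h with h | h | ⟨h1, i, hij, h2⟩
  · exact Or.inl h
  · exact Or.inr (Or.inl h)
  · exact Or.inr (Or.inr ⟨h1, i, Fin.lt_def.mp hij, h2⟩)

/-- A set of size `k ≥ 2` inside the separator must be a shared edge. -/
lemma sub_sep (F : Fin m → UnifHypergraph k) (hF : ForestCond F) (hk : 2 ≤ k)
    (j : Fin m) {e : Finset ℕ}
    (he : e ⊆ (F j).verts ∩ prevV F (j : ℕ)) (hcard : e.card = k) :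
    ∃ i : Fin m, (i : ℕ) < (j : ℕ) ∧ e ∈ (F i).edges ∧ e ∈ (F j).edges := by
  by_cases hj : (j : ℕ) = 0
  · exfalso
    have hsub : e ⊆ (∅ : Finset ℕ) := by
      intro x hx
      have := he hx
      rw [hj, prevV_zero] at this
      exact (Finset.mem_inter.mp this).2
    have := Finset.card_le_card hsub
    rw [Finset.card_empty] at this
    omega
  rcases sep F hF j hj with h | ⟨v, h⟩ | ⟨h1, i, hij, h2⟩
  · exfalso
    rw [h] at he
    have := Finset.card_le_card he
    rw [Finset.card_empty] at this
    omega
  · exfalso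
    rw [h] at he
    have := Finset.card_le_card he
    rw [Finset.card_singleton] at this
    omega
  · have hS : ((F j).verts ∩ prevV F (j : ℕ)).card = k := (F j).card_edges _ h1
    have heq : e = (F j).verts ∩ prevV F (j : ℕ) :=
      Finset.eq_of_subset_of_card_le he (by omega)
    exact ⟨i, hij, heq ▸ h2, heq ▸ h1⟩

/-- An edge of one member contained in the vertex set of another member is an
edge of the latter. -/
lemma edge_mem (F : Fin m → UnifHypergraph k) (hF : ForestCond F) (hk : 2 ≤ k) :
    ∀ a b : Fin m, ∀ e, e ∈ (F a).edges → e ⊆ (F b).verts → e ∈ (F b).edges := by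
  suffices h : ∀ N, ∀ a b : Fin m, (a : ℕ) ≤ N → ∀ e, e ∈ (F a).edges →
      e ⊆ (F b).verts → e ∈ (F b).edges by
    exact fun a b => h (a : ℕ) a b le_rfl
  intro N
  induction N using Nat.strong_induction_on with
  | _ N ih =>
    intro a b haN e hea heb
    rcases Nat.lt_trichotomy (a : ℕ) (b : ℕ) with hab | hab | hab
    · have hsub : e ⊆ (F b).verts ∩ prevV F (b : ℕ) := by
        intro x hx
        exact Finset.mem_inter.mpr ⟨heb hx,
          verts_subset_prevV F hab ((F a).edges_subset e hea hx)⟩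
      obtain ⟨i, hib, hei, hej⟩ := sub_sep F hF hk b hsub ((F a).card_edges e hea)
      exact hej
    · have : a = b := Fin.ext hab
      exact this ▸ hea
    · have hsub : e ⊆ (F a).verts ∩ prevV F (a : ℕ) := by
        intro x hx
        exact Finset.mem_inter.mpr ⟨(F a).edges_subset e hea hx,
          verts_subset_prevV F hab (heb hx)⟩
      obtain ⟨i, hia, hei, _⟩ := sub_sep F hF hk a hsub ((F a).card_edges e hea)
      exact ih (i : ℕ) (by omega) i b le_rfl e hei heb

/-- An edge contained in `prevV F n` is an edge of some member of index `< n`. -/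
lemma edge_mem_lt (F : Fin m → UnifHypergraph k) (hF : ForestCond F) (hk : 2 ≤ k) :
    ∀ a : Fin m, ∀ n, ∀ e, e ∈ (F a).edges → e ⊆ prevV F n →
      ∃ b : Fin m, (b : ℕ) < n ∧ e ∈ (F b).edges := by
  suffices h : ∀ N, ∀ a : Fin m, (a : ℕ) ≤ N → ∀ n e, e ∈ (F a).edges →
      e ⊆ prevV F n → ∃ b : Fin m, (b : ℕ) < n ∧ e ∈ (F b).edges by
    exact fun a => h (a : ℕ) a le_rfl
  intro N
  induction N using Nat.strong_induction_on with
  | _ N ih =>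
    intro a haN n e hea hen
    rcases Nat.lt_or_ge (a : ℕ) n with han | han
    · exact ⟨a, han, hea⟩
    · have hsub : e ⊆ (F a).verts ∩ prevV F (a : ℕ) := by
        intro x hx
        exact Finset.mem_inter.mpr ⟨(F a).edges_subset e hea hx,
          prevV_mono F han (hen hx)⟩
      obtain ⟨i, hia, hei, _⟩ := sub_sep F hF hk a hsub ((F a).card_edges e hea)
      have hN : (i : ℕ) < N ∨ (i : ℕ) ≤ N := Or.inr (by omega)
      rcases Nat.eq_zero_or_pos N with h0 | _
      · omega
      · exact ih (i : ℕ) (by omega) i (by omega) n e hei hen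

/-- The union of a forest of linear hypergraphs is linear. -/
lemma union_linear (F : Fin m → UnifHypergraph k) (hF : ForestCond F) (hk : 2 ≤ k)
    (hlinF : ∀ i, (F i).Linear) :
    ∀ a b : Fin m, ∀ e f, e ∈ (F a).edges → f ∈ (F b).edges → e ≠ f →
      (e ∩ f).card ≤ 1 := by
  suffices h : ∀ N, ∀ a b : Fin m, (a : ℕ) + (b : ℕ) ≤ N → ∀ e f, e ∈ (F a).edges →
      f ∈ (F b).edges → e ≠ f → (e ∩ f).card ≤ 1 by
    exact fun a b => h ((a : ℕ) + (b : ℕ)) a b le_rfl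
  intro N
  induction N using Nat.strong_induction_on with
  | _ N ih =>
    have main : ∀ a b : Fin m, (a : ℕ) + (b : ℕ) ≤ N → (a : ℕ) < (b : ℕ) →
        ∀ e f, e ∈ (F a).edges → f ∈ (F b).edges → e ≠ f → (e ∩ f).card ≤ 1 := by
      intro a b hN hab e f hea hfb hne
      have hb0 : (b : ℕ) ≠ 0 := by omega
      have hsub : e ∩ f ⊆ (F b).verts ∩ prevV F (b : ℕ) := by
        intro x hx
        rw [Finset.mem_inter] at hx
        exact Finset.mem_inter.mpr ⟨(F b).edges_subset f hfb hx.2,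
          verts_subset_prevV F hab ((F a).edges_subset e hea hx.1)⟩
      rcases sep F hF b hb0 with h | ⟨v, h⟩ | ⟨h1, i, hib, h2⟩
      · rw [h] at hsub
        have := Finset.card_le_card hsub
        rw [Finset.card_empty] at this
        omega
      · rw [h] at hsub
        have := Finset.card_le_card hsub
        rw [Finset.card_singleton] at this
        exact this
      · by_cases hfg : f = (F b).verts ∩ prevV F (b : ℕ)
        · -- f is the shared edge; recurse with the earlier copy
          have hfi : f ∈ (F i).edges := hfg ▸ h2
          exact ih ((a : ℕ) + (i : ℕ)) (by omega) a i (le_refl _) e f hea hfi hne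
        · have hsub2 : e ∩ f ⊆ f ∩ ((F b).verts ∩ prevV F (b : ℕ)) := by
            intro x hx
            exact Finset.mem_inter.mpr ⟨(Finset.mem_inter.mp hx).2, hsub hx⟩
          calc (e ∩ f).card ≤ (f ∩ ((F b).verts ∩ prevV F (b : ℕ))).card :=
                Finset.card_le_card hsub2
            _ ≤ 1 := hlinF b f hfb _ h1 hfg
    intro a b hN e f hea hfb hne
    rcases Nat.lt_trichotomy (a : ℕ) (b : ℕ) with hab | hab | hab
    · exact main a b hN hab e f hea hfb hne
    · exact hlinF a e hea f ((Fin.ext hab : a = b) ▸ hfb) hne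
    · rw [Finset.inter_comm]
      exact main b a (by omega) hab f e hfb hea (Ne.symm hne)

/-- Main induction: an inseparable induced subhypergraph of the union has its
vertex set inside one member. -/
lemma main_ind (F : Fin m → UnifHypergraph k) (hF : ForestCond F) (hk : 2 ≤ k)
    (hlinF : ∀ i, (F i).Linear) (J : UnifHypergraph k)
    (hJe : ∀ e, e ∈ J.edges ↔ (∃ a : Fin m, e ∈ (F a).edges) ∧ e ⊆ J.verts)
    (hins : J.Inseparable) :
    ∀ n, J.verts ⊆ prevV F n → ∃ i : Fin m, J.verts ⊆ (F i).verts := by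
  intro n
  induction n with
  | zero =>
    intro h
    exfalso
    obtain ⟨e, he⟩ := Finset.card_pos.mp (by have := hins.1.2; omega : 0 < J.edges.card)
    have hsub : e ⊆ (∅ : Finset ℕ) := by
      rw [← prevV_zero F]
      exact (J.edges_subset e he).trans h
    have := Finset.card_le_card hsub
    rw [J.card_edges e he, Finset.card_empty] at this
    omega
  | succ n ih =>
    intro hsub
    by_cases hmn : m ≤ n
    · apply ih
      intro x hx
      obtain ⟨i, hi, hxi⟩ := mem_prevV.mp (hsub hx)
      exact mem_prevV.mpr ⟨i, by have := i.isLt; omega, hxi⟩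
    push_neg at hmn
    set j : Fin m := ⟨n, hmn⟩ with hj
    have hjval : (j : ℕ) = n := rfl
    have hcov : prevV F (n + 1) ⊆ prevV F n ∪ (F j).verts := by
      intro x hx
      obtain ⟨i, hi, hxi⟩ := mem_prevV.mp hx
      rcases Nat.lt_or_ge (i : ℕ) n with h | h
      · exact Finset.mem_union_left _ (mem_prevV.mpr ⟨i, h, hxi⟩)
      · have hij : i = j := Fin.ext (by rw [hjval]; omega)
        exact Finset.mem_union_right _ (hij ▸ hxi)
    by_cases hB : J.verts ⊆ (F j).verts
    · exact ⟨j, hB⟩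
    by_cases hA : J.verts ⊆ prevV F n
    · exact ih hA
    have hn0 : n ≠ 0 := by
      rintro rfl
      apply hB
      intro x hx
      rcases Finset.mem_union.mp (hcov (hsub hx)) with h | h
      · rw [prevV_zero] at h
        exact absurd h (Finset.notMem_empty x)
      · exact h
    exfalso
    set A := J.verts \ prevV F n with hAdef
    set B := J.verts \ (F j).verts with hBdef
    have hAne : A.Nonempty := by rwa [hAdef, Finset.sdiff_nonempty]
    have hBne : B.Nonempty := by rwa [hBdef, Finset.sdiff_nonempty]
    set S := (F j).verts ∩ prevV F n with hSdef
    set z := S ∩ J.verts with hzdef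
    have hzsub : z ⊆ J.verts := Finset.inter_subset_right
    have hcover : ∀ x ∈ J.verts, x ∈ prevV F n ∨ x ∈ (F j).verts := by
      intro x hx
      exact Finset.mem_union.mp (hcov (hsub hx))
    have hmemz : ∀ x, x ∈ z ↔ (x ∈ (F j).verts ∧ x ∈ prevV F n) ∧ x ∈ J.verts := by
      intro x
      rw [hzdef, hSdef, Finset.mem_inter, Finset.mem_inter]
    have hmemA : ∀ x, x ∈ A ↔ x ∈ J.verts ∧ x ∉ prevV F n := by
      intro x
      rw [hAdef, Finset.mem_sdiff]
    have hmemB : ∀ x, x ∈ B ↔ x ∈ J.verts ∧ x ∉ (F j).verts := by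
      intro x
      rw [hBdef, Finset.mem_sdiff]
    have hverts : J.verts \ z = A ∪ B := by
      ext x
      rw [Finset.mem_sdiff, Finset.mem_union, hmemz, hmemA, hmemB]
      constructor
      · rintro ⟨h1, h2⟩
        rcases hcover x h1 with hp | hf
        · right
          exact ⟨h1, fun hf => h2 ⟨⟨hf, hp⟩, h1⟩⟩
        · by_cases hp : x ∈ prevV F n
          · right
            exact ⟨h1, fun hf2 => h2 ⟨⟨hf2, hp⟩, h1⟩⟩
          · left
            exact ⟨h1, hp⟩
      · rintro (⟨h1, h2⟩ | ⟨h1, h2⟩)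
        · exact ⟨h1, fun hh => h2 hh.1.2⟩
        · exact ⟨h1, fun hh => h2 hh.1.1⟩
    have hdisj : Disjoint A B := by
      rw [Finset.disjoint_left]
      intro x hxA hxB
      rw [hmemA] at hxA
      rw [hmemB] at hxB
      rcases hcover x hxA.1 with h | h
      · exact hxA.2 h
      · exact hxB.2 h
    have hedge : ∀ e ∈ J.edges, Disjoint e A ∨ Disjoint e B := by
      intro e he
      obtain ⟨⟨a, hea⟩, heJ⟩ := (hJe e).mp he
      obtain ⟨b, hbn, heb⟩ := edge_mem_lt F hF hk a (n + 1) e hea (heJ.trans hsub)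
      rcases Nat.lt_or_ge (b : ℕ) n with h | h
      · left
        rw [Finset.disjoint_left]
        intro x hxe hxA
        rw [hmemA] at hxA
        exact hxA.2 (verts_subset_prevV F h ((F b).edges_subset e heb hxe))
      · right
        have hbj : b = j := Fin.ext (by rw [hjval]; omega)
        rw [Finset.disjoint_left]
        intro x hxe hxB
        rw [hmemB] at hxB
        exact hxB.2 (hbj ▸ (F b).edges_subset e heb hxe)
    -- the separator cases give connectivity of `J.delete z`
    have hjn : (j : ℕ) = n := rfl
    have hconn : (J.delete z).Connected := by
      rcases sep F hF j (hjn ▸ hn0) with h | ⟨v, h⟩ | ⟨h1, i, hij, h2⟩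
      · apply hins.2.1 z hzsub _ _
        · rw [hzdef, hSdef, ← hjn, h]
          simp
          omega
        · intro x hx
          rw [hzdef, hSdef, ← hjn, h] at hx
          simp at hx
      · apply hins.2.1 z hzsub _ _
        · have : z ⊆ {v} := by
            rw [hzdef, hSdef, ← hjn, h]
            exact Finset.inter_subset_left
          have := Finset.card_le_card this
          simp at this
          omega
        · intro x hx y hy hxy e he hxye
          have hzv : z ⊆ {v} := by
            rw [hzdef, hSdef, ← hjn, h]
            exact Finset.inter_subset_left
          have hxv := Finset.mem_singleton.mp (hzv hx)
          have hyv := Finset.mem_singleton.mp (hzv hy)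
          exact hxy (hxv.trans hyv.symm)
      · rw [hjn, ← hSdef] at h1 h2
        by_cases hfJ : S ⊆ J.verts
        · have hzS : z = S := by
            rw [hzdef, Finset.inter_eq_left.mpr hfJ]
          have hSJ : S ∈ J.edges := (hJe S).mpr ⟨⟨j, h1⟩, hfJ⟩
          rw [hzS]
          exact hins.2.2 S hSJ
        · apply hins.2.1 z hzsub _ _
          · have hzS : z ⊆ S := Finset.inter_subset_left
            have hzne : z ≠ S := by
              intro h
              exact hfJ (h ▸ hzsub)
            have : z ⊂ S := ssubset_of_subset_of_ne hzS hzne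
            have := Finset.card_lt_card this
            have hSk : S.card = k := (F j).card_edges S h1
            omega
          · rintro x hx y hy hxy e he ⟨hxe, hye⟩
            obtain ⟨⟨a, hea⟩, heJ⟩ := (hJe e).mp he
            have hne : e ≠ S := by
              intro h
              exact hfJ (h ▸ heJ)
            have hcard := union_linear F hF hk hlinF a j e S hea h1 hne
            have h2le : 2 ≤ (e ∩ S).card := by
              apply Finset.one_lt_card.mpr
              exact ⟨x, Finset.mem_inter.mpr ⟨hxe, (Finset.inter_subset_left) hx⟩,
                y, Finset.mem_inter.mpr ⟨hye, (Finset.inter_subset_left) hy⟩, hxy⟩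
            omega
    have hAz : A ⊆ (J.delete z).verts := by
      rw [show (J.delete z).verts = J.verts \ z from rfl, hverts]
      exact Finset.subset_union_left
    obtain ⟨e, he, heA, heB⟩ := hconn A B
      (by rw [show (J.delete z).verts = J.verts \ z from rfl, hverts]) hdisj hAne hBne
    have heJ : e ∈ J.edges := (Finset.mem_filter.mp he).1
    rcases hedge e heJ with hd | hd
    · obtain ⟨x, hx⟩ := heA
      rw [Finset.mem_inter] at hx
      exact Finset.disjoint_left.mp hd hx.1 hx.2
    · obtain ⟨x, hx⟩ := heB
      rw [Finset.mem_inter] at hx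
      exact Finset.disjoint_left.mp hd hx.1 hx.2

end ForestAux

/-- Let `𝒻` be a forest of copies of linear `k`-uniform hypergraphs and let `J` be an
induced subhypergraph of `⋃𝒻`.  If `J` is `(e,v)`-inseparable, then `J` is an induced
subhypergraph of some member of `𝒻`. -/



theorem inseparable_subhypergraph_of_forest (k : ℕ) (𝒻 : Finset (UnifHypergraph k))
    (hlin : ∀ F ∈ 𝒻, F.Linear)
    (hforest : UnifHypergraph.IsForestOfCopies (𝒻 : Set (UnifHypergraph k)))
    (J : UnifHypergraph k)
    (hJ : J.IsInducedSub (UnifHypergraph.unionOf 𝒻))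
    (hins : J.Inseparable) :
    ∃ F ∈ 𝒻, J.IsInducedSub F := by
  classical
  rcases Nat.lt_or_ge k 2 with hk | hk
  · exfalso
    interval_cases k
    · have hle : J.edges.card ≤ 1 := Finset.card_le_one.mpr (by
        intro a ha b hb
        have ha0 := J.card_edges a ha
        have hb0 := J.card_edges b hb
        rw [Finset.card_eq_zero] at ha0 hb0
        rw [ha0, hb0])
      have := hins.1.2
      omega
    · obtain ⟨a, ha, b, hb, hab⟩ := Finset.one_lt_card.mp
        (by have := hins.1.2; omega : 1 < J.edges.card)
      obtain ⟨x, hxa⟩ := Finset.card_eq_one.mp (J.card_edges a ha)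
      obtain ⟨y, hyb⟩ := Finset.card_eq_one.mp (J.card_edges b hb)
      have hxy : x ≠ y := by
        rintro rfl
        exact hab (by rw [hxa, hyb])
      have hxJ : x ∈ J.verts := J.edges_subset a ha (hxa ▸ Finset.mem_singleton_self x)
      have hyJ : y ∈ J.verts := J.edges_subset b hb (hyb ▸ Finset.mem_singleton_self y)
      obtain ⟨e, he, hex, hey⟩ := hins.1.1 {x} (J.verts \ {x})
        (by rw [Finset.union_sdiff_of_subset (Finset.singleton_subset_iff.mpr hxJ)])
        (Finset.disjoint_sdiff) ⟨x, Finset.mem_singleton_self x⟩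
        ⟨y, Finset.mem_sdiff.mpr ⟨hyJ, by simpa using hxy.symm⟩⟩
      obtain ⟨w, hwe⟩ := Finset.card_eq_one.mp (J.card_edges e he)
      have h1 : x ∈ e := by
        obtain ⟨u, hu⟩ := hex
        rw [Finset.mem_inter, Finset.mem_singleton] at hu
        exact hu.2 ▸ hu.1
      obtain ⟨v, hv⟩ := hey
      rw [Finset.mem_inter, Finset.mem_sdiff, Finset.mem_singleton] at hv
      rw [hwe, Finset.mem_singleton] at h1
      have h2 : v = w := by
        have := hv.1
        rw [hwe, Finset.mem_singleton] at this
        exact this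
      exact hv.2.2 (h2.trans h1.symm)
  · obtain ⟨m, F, hinj, hmem, hF⟩ := hforest
    have hmemF : ∀ i, F i ∈ 𝒻 := fun i =>
      Finset.mem_coe.mp ((hmem (F i)).mpr ⟨i, rfl⟩)
    have hlinF : ∀ i, (F i).Linear := fun i => hlin _ (hmemF i)
    have hUe : ∀ e, e ∈ (UnifHypergraph.unionOf 𝒻).edges ↔ ∃ a, e ∈ (F a).edges := by
      intro e
      rw [show (UnifHypergraph.unionOf 𝒻).edges = 𝒻.sup UnifHypergraph.edges from rfl,
        Finset.mem_sup]
      constructor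
      · rintro ⟨H, hH, he⟩
        obtain ⟨i, rfl⟩ := (hmem H).mp (Finset.mem_coe.mpr hH)
        exact ⟨i, he⟩
      · rintro ⟨a, ha⟩
        exact ⟨F a, hmemF a, ha⟩
    have hJe : ∀ e, e ∈ J.edges ↔ (∃ a, e ∈ (F a).edges) ∧ e ⊆ J.verts := fun e => by
      rw [hJ.2 e, hUe]
    have hsub : J.verts ⊆ ForestAux.prevV F m := by
      intro x hx
      have hx2 : x ∈ 𝒻.sup UnifHypergraph.verts := hJ.1 hx
      rw [Finset.mem_sup] at hx2
      obtain ⟨H, hH, hxH⟩ := hx2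
      obtain ⟨i, rfl⟩ := (hmem H).mp (Finset.mem_coe.mpr hH)
      exact ForestAux.mem_prevV.mpr ⟨i, i.isLt, hxH⟩
    obtain ⟨i, hJi⟩ := ForestAux.main_ind F hF hk hlinF J hJe hins m hsub
    refine ⟨F i, hmemF i, hJi, fun e => ?_⟩
    constructor
    · intro he
      obtain ⟨⟨a, hea⟩, heJ⟩ := (hJe e).mp he
      exact ⟨ForestAux.edge_mem F hF hk a i e hea (heJ.trans hJi), heJ⟩
    · rintro ⟨hei, heJ⟩
      exact (hJe e).mpr ⟨⟨i, hei⟩, heJ⟩
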